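/- For any three unit vectors ψ₁, ψ₂, ψ₃ in a complex Hilbert space, the overlaps Δ_{ij} = |⟨ψᵢ,ψⱼ⟩|² satisfy 1 − Δ₁₂ − Δ₁₃ − Δ₂₃ + 2√(Δ₁₂Δ₁₃Δ₂₃) ≥ 0. -/

import Mathlib

/-- The overlaps `Δ_{ij} = |⟨ψᵢ,ψⱼ⟩|²` of any three unit vectors satisfy
`1 - Δ₁₂ - Δ₁₃ - Δ₂₃ + 2√(Δ₁₂Δ₁₃Δ₂₃) ≥ 0`. -/
theorem overlap_triple_inequality
    (E : Type*) [NormedAddCommGroup E] [InnerProductSpace ℂ E]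
    [FiniteDimensional ℂ E]
    (ψ₁ ψ₂ ψ₃ : E) (h₁ : ‖ψ₁‖ = 1) (h₂ : ‖ψ₂‖ = 1) (h₃ : ‖ψ₃‖ = 1) :
    1 - ‖(inner ℂ ψ₁ ψ₂ : ℂ)‖ ^ 2 - ‖(inner ℂ ψ₁ ψ₃ : ℂ)‖ ^ 2 - ‖(inner ℂ ψ₂ ψ₃ : ℂ)‖ ^ 2
      + 2 * Real.sqrt (‖(inner ℂ ψ₁ ψ₂ : ℂ)‖ ^ 2 * ‖(inner ℂ ψ₁ ψ₃ : ℂ)‖ ^ 2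
          * ‖(inner ℂ ψ₂ ψ₃ : ℂ)‖ ^ 2) ≥ 0 := by
  set α : ℂ := inner ℂ ψ₁ ψ₂ with hα
  set β : ℂ := inner ℂ ψ₁ ψ₃ with hβ
  set γ : ℂ := inner ℂ ψ₂ ψ₃ with hγ
  have hsqrt : Real.sqrt (‖α‖ ^ 2 * ‖β‖ ^ 2 * ‖γ‖ ^ 2) = ‖α‖ * ‖β‖ * ‖γ‖ := by
    rw [show ‖α‖ ^ 2 * ‖β‖ ^ 2 * ‖γ‖ ^ 2 = (‖α‖ * ‖β‖ * ‖γ‖) ^ 2 by ring,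
      Real.sqrt_sq (by positivity)]
  have h11 : (inner ℂ ψ₁ ψ₁ : ℂ) = 1 := by
    rw [inner_self_eq_norm_sq_to_K, h₁]; norm_num
  have hinner : (inner ℂ (ψ₂ - α • ψ₁) (ψ₃ - β • ψ₁) : ℂ) = γ - (starRingEnd ℂ) α * β := by
    simp [inner_sub_left, inner_sub_right, inner_smul_left, inner_smul_right, h11, h₁, mul_comm,
      ← inner_conj_symm ψ₂ ψ₁, ← hα, ← hβ, ← hγ]
  have hu : ‖ψ₂ - α • ψ₁‖ ^ 2 = 1 - ‖α‖ ^ 2 := by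
    rw [@norm_sub_sq ℂ, inner_smul_right,
      show (inner ℂ ψ₂ ψ₁ : ℂ) = starRingEnd ℂ (inner ℂ ψ₁ ψ₂) from (inner_conj_symm _ _).symm,
      ← hα, Complex.mul_conj']
    simp [norm_smul, h₁, h₂, Complex.sq_norm, ← Complex.ofReal_pow, Complex.ofReal_re]
    ring
  have hv : ‖ψ₃ - β • ψ₁‖ ^ 2 = 1 - ‖β‖ ^ 2 := by
    rw [@norm_sub_sq ℂ, inner_smul_right,
      show (inner ℂ ψ₃ ψ₁ : ℂ) = starRingEnd ℂ (inner ℂ ψ₁ ψ₃) from (inner_conj_symm _ _).symm,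
      ← hβ, Complex.mul_conj']
    simp [norm_smul, h₁, h₃, Complex.sq_norm, ← Complex.ofReal_pow, Complex.ofReal_re]
    ring
  have hCS : ‖(inner ℂ (ψ₂ - α • ψ₁) (ψ₃ - β • ψ₁) : ℂ)‖ ≤ ‖ψ₂ - α • ψ₁‖ * ‖ψ₃ - β • ψ₁‖ :=
    norm_inner_le_norm _ _
  rw [hinner] at hCS
  have htri : |‖γ‖ - ‖α‖ * ‖β‖| ≤ ‖γ - (starRingEnd ℂ) α * β‖ := by
    have := abs_norm_sub_norm_le γ ((starRingEnd ℂ) α * β)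
    simpa [norm_mul] using this
  have hsq : (‖γ‖ - ‖α‖ * ‖β‖) ^ 2 ≤ (1 - ‖α‖ ^ 2) * (1 - ‖β‖ ^ 2) := by
    have h1 : (‖γ‖ - ‖α‖ * ‖β‖) ^ 2 ≤ (‖ψ₂ - α • ψ₁‖ * ‖ψ₃ - β • ψ₁‖) ^ 2 := by
      rw [← sq_abs (‖γ‖ - ‖α‖ * ‖β‖)]
      exact pow_le_pow_left₀ (abs_nonneg _) (htri.trans hCS) 2
    calc (‖γ‖ - ‖α‖ * ‖β‖) ^ 2 ≤ (‖ψ₂ - α • ψ₁‖ * ‖ψ₃ - β • ψ₁‖) ^ 2 := h1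
      _ = ‖ψ₂ - α • ψ₁‖ ^ 2 * ‖ψ₃ - β • ψ₁‖ ^ 2 := by ring
      _ = (1 - ‖α‖ ^ 2) * (1 - ‖β‖ ^ 2) := by rw [hu, hv]
  rw [hsqrt]
  nlinarith [hsq, norm_nonneg α, norm_nonneg β, norm_nonneg γ]
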